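/- arXiv:1504.03438 — 3 statements merged into one kernel-verified Lean document; each statement's English description precedes it below -/
import Mathlib

section
/- For every real number σ, the value ξ(σ) of the complete Riemann zeta function at the real point σ is a positive real number, i.e. ξ(σ) has zero imaginary part and strictly positive real part. -/
open MeasureTheory

namespace XiAux

open Complex Set

/-- Terms of the "grouped" Dirichlet eta series. -/
noncomputable def term (k : ℕ) (s : ℂ) : ℂ :=
    (2 * (k : ℂ) + 1) ^ (-s) - (2 * (k : ℂ) + 2) ^ (-s)

/-- The grouped eta function, analytic on `re s > 0`. -/
noncomputable def G (s : ℂ) : ℂ := ∑' k : ℕ, term k s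

lemma norm_term_le (k : ℕ) {s : ℂ} (hs : 0 < s.re) :
    ‖term k s‖ ≤ ‖s‖ * (2 * (k : ℝ) + 1) ^ (-s.re - 1) := by
  set n : ℝ := 2 * (k : ℝ) + 1 with hn
  have hk0 : (0 : ℝ) ≤ (k : ℝ) := Nat.cast_nonneg k
  have hn1 : (1 : ℝ) ≤ n := by rw [hn]; linarith
  have hn0 : (0 : ℝ) < n := by positivity
  set f : ℝ → ℂ := fun x => (x : ℂ) ^ (-s) with hf
  set f' : ℝ → ℂ := fun x => (-s) * (x : ℂ) ^ (-s - 1) with hf'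
  have hderiv : ∀ x ∈ Icc n (n + 1), HasDerivWithinAt f (f' x) (Icc n (n + 1)) x := by
    intro x hx
    have hx0 : (0 : ℝ) < x := lt_of_lt_of_le hn0 hx.1
    have h1 : HasDerivAt (fun z : ℂ => z ^ (-s)) ((-s) * (x : ℂ) ^ (-s - 1) * 1) (x : ℝ) :=
      (hasDerivAt_id (x : ℂ)).cpow_const (ofReal_mem_slitPlane.2 hx0)
    have h2 := h1.comp_ofReal
    simpa [f, f'] using h2.hasDerivWithinAt
  have hbound : ∀ x ∈ Icc n (n + 1), ‖f' x‖ ≤ ‖s‖ * n ^ (-s.re - 1) := by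
    intro x hx
    have hx0 : (0 : ℝ) < x := lt_of_lt_of_le hn0 hx.1
    have h1 : ‖f' x‖ = ‖s‖ * x ^ (-s.re - 1) := by
      rw [hf', norm_mul, norm_neg]
      congr 1
      rw [Complex.norm_cpow_eq_rpow_re_of_pos hx0]
      simp
    rw [h1]
    have h2 : x ^ (-s.re - 1) ≤ n ^ (-s.re - 1) :=
      Real.rpow_le_rpow_of_nonpos hn0 hx.1 (by linarith)
    exact mul_le_mul_of_nonneg_left h2 (norm_nonneg s)
  have key := Convex.norm_image_sub_le_of_norm_hasDerivWithin_le hderiv hbound (convex_Icc _ _)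
    (right_mem_Icc.2 (by linarith)) (left_mem_Icc.2 (by linarith))
  have hterm : term k s = f n - f (n + 1) := by
    simp only [term, f, hn]
    push_cast
    ring_nf
  rw [hterm]
  calc ‖f n - f (n + 1)‖ ≤ ‖s‖ * n ^ (-s.re - 1) * ‖n - (n + 1)‖ := key
    _ = ‖s‖ * n ^ (-s.re - 1) := by norm_num

lemma summable_aux {a : ℝ} (ha : 0 < a) (B : ℝ) :
    Summable (fun k : ℕ => B * (2 * (k : ℝ) + 1) ^ (-a - 1)) := by
  apply Summable.mul_left
  have h1 : Summable (fun k : ℕ => ((k : ℝ) + 1) ^ (-a - 1)) := by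
    have h2 : Summable (fun k : ℕ => (k : ℝ) ^ (-a - 1)) :=
      Real.summable_nat_rpow.2 (by linarith)
    have := (summable_nat_add_iff 1).2 h2
    simpa using this
  apply Summable.of_nonneg_of_le (fun k => Real.rpow_nonneg (by positivity) _) _ h1
  intro k
  apply Real.rpow_le_rpow_of_nonpos (by positivity) (by linarith [Nat.cast_nonneg (α := ℝ) k])
    (by linarith)

lemma summable_term {s : ℂ} (hs : 0 < s.re) : Summable (fun k => term k s) := by
  apply Summable.of_norm
  exact Summable.of_nonneg_of_le (fun k => norm_nonneg _) (fun k => norm_term_le k hs)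
    (summable_aux hs ‖s‖)

lemma G_differentiableAt {s : ℂ} (hs : 0 < s.re) : DifferentiableAt ℂ G s := by
  set a : ℝ := s.re / 2 with ha
  have ha0 : 0 < a := by simpa [ha] using half_pos hs
  set R : ℝ := ‖s‖ + 1 with hR
  set U : Set ℂ := {w | a < w.re} ∩ Metric.ball 0 R with hU
  have hUo : IsOpen U := ((isOpen_lt continuous_const Complex.continuous_re).inter
    Metric.isOpen_ball)
  have hsU : s ∈ U := by
    constructor
    · simp only [mem_setOf_eq, ha]; linarith
    · simp [hR, mem_ball_zero_iff]
  have hdiff : DifferentiableOn ℂ G U := by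
    show DifferentiableOn ℂ (fun w : ℂ => ∑' k : ℕ, term k w) U
    apply differentiableOn_tsum_of_summable_norm
      (u := fun k : ℕ => R * (2 * (k : ℝ) + 1) ^ (-a - 1))
      (F := fun (k : ℕ) (w : ℂ) => term k w) (summable_aux ha0 R) _ hUo
    · intro k w hw
      have hw0 : 0 < w.re := lt_trans ha0 hw.1
      refine (norm_term_le k hw0).trans ?_
      have h1 : ‖w‖ ≤ R := le_of_lt (by simpa [hR, mem_ball_zero_iff] using hw.2)
      have h2 : (2 * (k : ℝ) + 1) ^ (-w.re - 1) ≤ (2 * (k : ℝ) + 1) ^ (-a - 1) := by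
        apply Real.rpow_le_rpow_of_exponent_le
          (by have := Nat.cast_nonneg (α := ℝ) k; linarith)
        have := hw.1
        simp only [mem_setOf_eq] at this
        linarith
      exact mul_le_mul h1 h2 (Real.rpow_nonneg (by positivity) _) (by rw [hR]; positivity)
    · intro k
      have hc1 : (2 * (k : ℂ) + 1) ≠ 0 := by
        have : ((2 * (k : ℝ) + 1 : ℝ) : ℂ) ≠ 0 := by
          rw [Complex.ofReal_ne_zero]; positivity
        simpa using this
      have hc2 : (2 * (k : ℂ) + 2) ≠ 0 := by
        have : ((2 * (k : ℝ) + 2 : ℝ) : ℂ) ≠ 0 := by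
          rw [Complex.ofReal_ne_zero]; positivity
        simpa using this
      apply DifferentiableOn.sub
      · exact (differentiable_neg.const_cpow (Or.inl hc1)).differentiableOn
      · exact (differentiable_neg.const_cpow (Or.inl hc2)).differentiableOn
  exact (hdiff.differentiableAt (hUo.mem_nhds hsU))

lemma G_eq_of_one_lt {s : ℂ} (hs : 1 < s.re) :
    G s = (1 - 2 ^ (1 - s)) * riemannZeta s := by
  have hs0 : s ≠ 0 := Complex.ne_zero_of_one_lt_re hs
  set f : ℕ → ℂ := fun n => 1 / (n : ℂ) ^ s with hf
  have hsum : Summable f := Complex.summable_one_div_nat_cpow.2 hs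
  have he : Summable (fun k => f (2 * k)) :=
    hsum.comp_injective (mul_right_injective₀ two_ne_zero)
  have ho : Summable (fun k => f (2 * k + 1)) :=
    hsum.comp_injective (fun a b h => by omega)
  have ho2 : Summable (fun k => f (2 * k + 2)) :=
    hsum.comp_injective (fun a b h => by omega)
  have hζ : riemannZeta s = ∑' n, f n := zeta_eq_tsum_one_div_nat_cpow hs
  have hsplit : (∑' k, f (2 * k)) + ∑' k, f (2 * k + 1) = ∑' n, f n :=
    tsum_even_add_odd he ho
  have hshift : ∑' k, f (2 * k) = ∑' k, f (2 * k + 2) := by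
    have h0 : f 0 = 0 := by simp [hf, Complex.zero_cpow hs0]
    rw [Summable.tsum_eq_zero_add he]
    simp only [mul_zero, h0, zero_add]
    exact tsum_congr fun k => congrArg f (by omega)
  have heven : ∑' k, f (2 * k) = (2 : ℂ) ^ (-s) * riemannZeta s := by
    rw [hζ, ← tsum_mul_left]
    congr 1
    ext k
    rcases Nat.eq_zero_or_pos k with rfl | hk
    · simp [hf, Complex.zero_cpow hs0]
    · have hksplit : ((2 * k : ℕ) : ℂ) ^ s = (2 : ℂ) ^ s * (k : ℂ) ^ s := by
        have : ((2 * k : ℕ) : ℂ) = ((2 : ℝ) : ℂ) * ((k : ℝ) : ℂ) := by push_cast; ring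
        rw [this, Complex.mul_cpow_ofReal_nonneg (by norm_num) (Nat.cast_nonneg k)]
        norm_num
      simp only [hf]
      rw [hksplit]
      simp only [Complex.cpow_neg, one_div, mul_inv]
  have hGexp : G s = (∑' k, f (2 * k + 1)) - ∑' k, f (2 * k + 2) := by
    rw [G, ← Summable.tsum_sub ho ho2]
    congr 1
    ext k
    simp only [term, hf]
    push_cast
    rw [Complex.cpow_neg, Complex.cpow_neg, one_div, one_div]
  have h2s : (2 : ℂ) ^ (1 - s) = 2 * (2 : ℂ) ^ (-s) := by
    rw [show (1 : ℂ) - s = 1 + (-s) by ring, Complex.cpow_add _ _ (two_ne_zero), Complex.cpow_one]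
  rw [hGexp, ← hshift]
  have : ∑' k, f (2 * k + 1) = riemannZeta s - ∑' k, f (2 * k) := by
    rw [hζ, ← hsplit]; ring
  rw [this, heven, h2s]
  ring

lemma G_eq_zeta {s : ℂ} (h0 : 0 < s.re) (h1 : s ≠ 1) :
    G s = (1 - 2 ^ (1 - s)) * riemannZeta s := by
  set U : Set ℂ := {w | 0 < w.re ∧ w ≠ 1} with hUdef
  have hUo : IsOpen U := by
    have : U = {w : ℂ | 0 < w.re} ∩ {(1 : ℂ)}ᶜ := by
      ext w
      constructor
      · rintro ⟨ha1, ha2⟩; exact ⟨ha1, ha2⟩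
      · rintro ⟨ha1, ha2⟩; exact ⟨ha1, ha2⟩
    rw [this]
    exact (isOpen_lt continuous_const Complex.continuous_re).inter isOpen_compl_singleton
  have hA : Convex ℝ {w : ℂ | 0 < w.re ∧ w.re < 1} :=
    (convex_halfSpace_re_gt 0).inter (convex_halfSpace_re_lt 1)
  have hB : Convex ℝ {w : ℂ | 1 < w.re} := convex_halfSpace_re_gt 1
  have hC : Convex ℝ {w : ℂ | 0 < w.re ∧ 0 < w.im} :=
    (convex_halfSpace_re_gt 0).inter (convex_halfSpace_im_gt 0)
  have hD : Convex ℝ {w : ℂ | 0 < w.re ∧ w.im < 0} :=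
    (convex_halfSpace_re_gt 0).inter (convex_halfSpace_im_lt 0)
  have hUc : IsPreconnected U := by
    have p1 : IsPreconnected ({w : ℂ | 0 < w.re ∧ w.re < 1} ∪ {w : ℂ | 0 < w.re ∧ 0 < w.im}) := by
      apply IsPreconnected.union (Complex.mk (1/4) (1/2))
      · exact ⟨show (0:ℝ) < 1/4 by norm_num, show (1:ℝ)/4 < 1 by norm_num⟩
      · exact ⟨show (0:ℝ) < 1/4 by norm_num, show (0:ℝ) < 1/2 by norm_num⟩
      · exact hA.isPreconnected
      · exact hC.isPreconnected
    have p2 : IsPreconnected (({w : ℂ | 0 < w.re ∧ w.re < 1} ∪ {w : ℂ | 0 < w.re ∧ 0 < w.im})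
        ∪ {w : ℂ | 1 < w.re}) := by
      apply IsPreconnected.union (Complex.mk 2 1)
      · exact Or.inr ⟨show (0:ℝ) < 2 by norm_num, show (0:ℝ) < 1 by norm_num⟩
      · exact show (1:ℝ) < 2 by norm_num
      · exact p1
      · exact hB.isPreconnected
    have p3 : IsPreconnected ((({w : ℂ | 0 < w.re ∧ w.re < 1} ∪ {w : ℂ | 0 < w.re ∧ 0 < w.im})
        ∪ {w : ℂ | 1 < w.re}) ∪ {w : ℂ | 0 < w.re ∧ w.im < 0}) := by
      apply IsPreconnected.union (Complex.mk (1/4) (-(1/2)))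
      · exact Or.inl (Or.inl ⟨show (0:ℝ) < 1/4 by norm_num, show (1:ℝ)/4 < 1 by norm_num⟩)
      · exact ⟨show (0:ℝ) < 1/4 by norm_num, show -(1/2 : ℝ) < 0 by norm_num⟩
      · exact p2
      · exact hD.isPreconnected
    have hset : U = (({w : ℂ | 0 < w.re ∧ w.re < 1} ∪ {w : ℂ | 0 < w.re ∧ 0 < w.im})
        ∪ {w : ℂ | 1 < w.re}) ∪ {w : ℂ | 0 < w.re ∧ w.im < 0} := by
      ext w
      simp only [hUdef, mem_setOf_eq, mem_union]
      constructor
      · rintro ⟨hre, hne⟩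
        rcases lt_trichotomy w.im 0 with him | him | him
        · exact Or.inr ⟨hre, him⟩
        · rcases lt_trichotomy w.re 1 with hr | hr | hr
          · exact Or.inl (Or.inl (Or.inl ⟨hre, hr⟩))
          · exfalso
            apply hne
            apply Complex.ext
            · simpa using hr
            · simpa using him
          · exact Or.inl (Or.inr hr)
        · exact Or.inl (Or.inl (Or.inr ⟨hre, him⟩))
      · rintro ((((⟨h1, h2⟩ | ⟨h1, h2⟩) | h1) | ⟨h1, h2⟩))
        · exact ⟨h1, fun h => by simp [h] at h2⟩
        · exact ⟨h1, fun h => by simp [h] at h2⟩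
        · exact ⟨by linarith, fun h => by simp [h] at h1⟩
        · exact ⟨h1, fun h => by simp [h] at h2⟩
    rw [hset]
    exact p3
  have hGA : AnalyticOnNhd ℂ G U := by
    apply DifferentiableOn.analyticOnNhd _ hUo
    exact fun t ht => (G_differentiableAt ht.1).differentiableWithinAt
  have hHA : AnalyticOnNhd ℂ (fun w => (1 - 2 ^ (1 - w)) * riemannZeta w) U := by
    apply DifferentiableOn.analyticOnNhd _ hUo
    intro t ht
    apply DifferentiableAt.differentiableWithinAt
    exact (((differentiableAt_const (1 : ℂ)).sub
      (((differentiableAt_const (1 : ℂ)).sub differentiableAt_id).const_cpow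
        (Or.inl two_ne_zero))).mul (differentiableAt_riemannZeta ht.2))
  have h2U : (2 : ℂ) ∈ U := by
    constructor
    · simp
    · norm_num
  have hev : G =ᶠ[nhds 2] (fun w => (1 - 2 ^ (1 - w)) * riemannZeta w) := by
    have hmem : {w : ℂ | 1 < w.re} ∈ nhds (2 : ℂ) := by
      apply (isOpen_lt continuous_const Complex.continuous_re).mem_nhds
      simp
    exact Filter.eventually_of_mem hmem (fun w hw => G_eq_of_one_lt hw)
  exact hGA.eqOn_of_preconnected_of_eventuallyEq hHA hUc h2U hev ⟨h0, h1⟩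

lemma zeta_neg_of_strip {σ : ℝ} (h0 : 0 < σ) (h1 : σ < 1) :
    ∃ r : ℝ, r < 0 ∧ riemannZeta σ = r := by
  set rterm : ℕ → ℝ := fun k => (2 * (k : ℝ) + 1) ^ (-σ) - (2 * (k : ℝ) + 2) ^ (-σ) with hrt
  have hofReal : ∀ k, term k (σ : ℂ) = ((rterm k : ℝ) : ℂ) := by
    intro k
    simp only [term, hrt]
    push_cast
    rw [Complex.ofReal_cpow (by positivity), Complex.ofReal_cpow (by positivity)]
    push_cast
    ring
  have hre : (0 : ℝ) < (σ : ℂ).re := by simpa using h0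
  have hsummable : Summable rterm := by
    have := summable_term hre
    rw [show (fun k => term k (σ : ℂ)) = (fun k => ((rterm k : ℝ) : ℂ)) from funext hofReal]
      at this
    exact Complex.summable_ofReal.1 this
  have hGσ : G (σ : ℂ) = ((∑' k, rterm k : ℝ) : ℂ) := by
    rw [G, Complex.ofReal_tsum]
    exact tsum_congr hofReal
  have hpos : 0 < ∑' k, rterm k := by
    apply Summable.tsum_pos hsummable _ 0
    · have e1 : (2 * ((0:ℕ):ℝ) + 1) = 1 := by norm_num
      have e2 : (2 * ((0:ℕ):ℝ) + 2) = 2 := by norm_num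
      simp only [hrt, e1, e2, Real.one_rpow]
      have h2 : (2:ℝ) ^ (-σ) < 1 :=
        Real.rpow_lt_one_of_one_lt_of_neg (by norm_num) (by linarith)
      linarith
    · intro k
      simp only [hrt, sub_nonneg]
      exact Real.rpow_le_rpow_of_nonpos (by positivity) (by linarith) (by linarith)
  have hd : (1 : ℂ) - 2 ^ (1 - (σ : ℂ)) = (((1 - 2 ^ (1 - σ) : ℝ)) : ℂ) := by
    have hc : ((2:ℝ) : ℂ) ^ (((1 - σ : ℝ)) : ℂ) = (((2 ^ (1 - σ) : ℝ)) : ℂ) :=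
      (Complex.ofReal_cpow (by norm_num) _).symm
    push_cast
    rw [← hc]
    push_cast
    ring
  have hdneg : (1 : ℝ) - 2 ^ (1 - σ) < 0 := by
    have : (1 : ℝ) < 2 ^ (1 - σ) := by
      rw [Real.one_lt_rpow_iff_of_pos (by norm_num)]
      left
      constructor <;> [norm_num; linarith]
    linarith
  have hζeq := G_eq_zeta hre (by
    intro h
    have : σ = 1 := by exact_mod_cast h
    linarith)
  rw [hGσ, hd] at hζeq
  have hdne : (1 - 2 ^ (1 - σ) : ℝ) ≠ 0 := ne_of_lt hdneg
  refine ⟨(∑' k, rterm k) / (1 - 2 ^ (1 - σ)), div_neg_of_pos_of_neg hpos hdneg, ?_⟩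
  have hdne' : (((1 - 2 ^ (1 - σ) : ℝ)) : ℂ) ≠ 0 := by exact_mod_cast hdne
  rw [Complex.ofReal_div, eq_div_iff hdne', mul_comm]
  exact hζeq.symm

lemma zeta_pos_of_one_lt {σ : ℝ} (h : 1 < σ) :
    ∃ r : ℝ, 0 < r ∧ riemannZeta σ = r := by
  have hre : (1 : ℝ) < (σ : ℂ).re := by simpa using h
  have hζ := zeta_eq_tsum_one_div_nat_cpow hre
  have hsummable : Summable (fun n : ℕ => 1 / (n : ℝ) ^ σ) :=
    Real.summable_one_div_nat_rpow.2 h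
  have hcast : ∀ n : ℕ, 1 / (n : ℂ) ^ (σ : ℂ) = ((1 / (n : ℝ) ^ σ : ℝ) : ℂ) := by
    intro n
    rw [show ((n : ℕ) : ℂ) = (((n : ℝ)) : ℂ) by push_cast; ring,
      ← Complex.ofReal_cpow (Nat.cast_nonneg n)]
    push_cast
    ring
  refine ⟨∑' n : ℕ, 1 / (n : ℝ) ^ σ, ?_, ?_⟩
  · apply Summable.tsum_pos hsummable _ 1
    · simp
    · intro n; positivity
  · rw [hζ, Complex.ofReal_tsum]
    exact tsum_congr hcast

lemma Gammaℝ_pos {σ : ℝ} (h : 0 < σ) :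
    ∃ r : ℝ, 0 < r ∧ Complex.Gammaℝ σ = r := by
  refine ⟨Real.pi ^ (-σ / 2) * Real.Gamma (σ / 2), ?_, ?_⟩
  · have := Real.Gamma_pos_of_pos (half_pos h)
    have := Real.rpow_pos_of_pos Real.pi_pos (-σ / 2)
    positivity
  · rw [Complex.Gammaℝ_def]
    rw [show -(σ : ℂ) / 2 = ((-σ / 2 : ℝ) : ℂ) by push_cast; ring,
      show (σ : ℂ) / 2 = (((σ / 2 : ℝ)) : ℂ) by push_cast; ring,
      ← Complex.ofReal_cpow Real.pi_pos.le, Complex.Gamma_ofReal]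
    push_cast
    ring

end XiAux

/-- The complete Riemann zeta function `ξ(s) = s(s-1)π^{-s/2}Γ(s/2)ζ(s)`,
expressed via the entire function `completedRiemannZeta₀`. -/
noncomputable def xi (s : ℂ) : ℂ := s * (s - 1) * completedRiemannZeta₀ s + 1

namespace XiAux

lemma xi_eq {s : ℂ} (h0 : s ≠ 0) (h1 : s ≠ 1) :
    xi s = s * (s - 1) * completedRiemannZeta s := by
  rw [xi, completedRiemannZeta_eq]
  have h1' : (1 : ℂ) - s ≠ 0 := sub_ne_zero.2 (Ne.symm h1)
  field_simp
  ring

lemma xi_symm (s : ℂ) : xi (1 - s) = xi s := by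
  unfold xi
  rw [completedRiemannZeta₀_one_sub]
  ring

lemma xi_pos_of_half_le {σ : ℝ} (h : 1 / 2 ≤ σ) :
    ∃ r : ℝ, 0 < r ∧ xi σ = r := by
  rcases eq_or_ne σ 1 with h1 | h1
  · refine ⟨1, one_pos, ?_⟩
    rw [h1]
    simp [xi]
  have h0 : 0 < σ := by linarith
  have hσ0 : (σ : ℂ) ≠ 0 := by exact_mod_cast ne_of_gt h0
  have hσ1 : (σ : ℂ) ≠ 1 := by exact_mod_cast h1
  obtain ⟨gr, hgr, hgeq⟩ := Gammaℝ_pos h0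
  have hζdef := riemannZeta_def_of_ne_zero hσ0
  have hgne : Complex.Gammaℝ (σ : ℂ) ≠ 0 := by
    rw [hgeq]; exact_mod_cast ne_of_gt hgr
  have hΛ : completedRiemannZeta (σ : ℂ) = Complex.Gammaℝ (σ : ℂ) * riemannZeta (σ : ℂ) := by
    rw [hζdef]
    field_simp
  rcases lt_or_gt_of_ne h1 with hlt | hgt
  · obtain ⟨zr, hzr, hzeq⟩ := zeta_neg_of_strip h0 hlt
    refine ⟨σ * (σ - 1) * (gr * zr), ?_, ?_⟩
    · have hn1 : σ * (σ - 1) < 0 := mul_neg_of_pos_of_neg h0 (by linarith)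
      have hn2 : gr * zr < 0 := mul_neg_of_pos_of_neg hgr hzr
      exact mul_pos_of_neg_of_neg hn1 hn2
    · rw [xi_eq hσ0 hσ1, hΛ, hgeq, hzeq]
      push_cast
      ring
  · obtain ⟨zr, hzr, hzeq⟩ := zeta_pos_of_one_lt hgt
    refine ⟨σ * (σ - 1) * (gr * zr), ?_, ?_⟩
    · have : 0 < σ * (σ - 1) := mul_pos h0 (by linarith)
      positivity
    · rw [xi_eq hσ0 hσ1, hΛ, hgeq, hzeq]
      push_cast
      ring

end XiAux

theorem xi_real_pos (σ : ℝ) : (xi σ).im = 0 ∧ 0 < (xi σ).re := by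
  have key : ∃ r : ℝ, 0 < r ∧ xi σ = r := by
    rcases le_or_gt (1 / 2) σ with h | h
    · exact XiAux.xi_pos_of_half_le h
    · obtain ⟨r, hr, heq⟩ := XiAux.xi_pos_of_half_le (σ := 1 - σ) (by linarith)
      refine ⟨r, hr, ?_⟩
      rw [← heq]
      have h2 : ((1 - σ : ℝ) : ℂ) = 1 - (σ : ℂ) := by push_cast; ring
      rw [h2, XiAux.xi_symm]
  obtain ⟨r, hr, heq⟩ := key
  rw [heq]
  exact ⟨Complex.ofReal_im r, by simpa using hr⟩
end

section
/- For every complex number α with Re(α) > 0 and every real number z, α/(α − iz) = exp( ∫₀^∞ (e^{izx} − 1) x^{−1} e^{−αx} dx ), the integral converging absolutely. -/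
open MeasureTheory Complex Set Filter

private lemma hasDerivAt_cexp_mul (c : ℂ) (t : ℝ) :
    HasDerivAt (fun x : ℝ => Complex.exp (c * x)) (c * Complex.exp (c * t)) t := by
  have h : HasDerivAt (fun w : ℂ => Complex.exp (c * w)) (c * Complex.exp (c * t)) (t : ℂ) := by
    simpa [mul_comm] using ((hasDerivAt_id (t : ℂ)).const_mul c).cexp
  exact h.comp_ofReal

private lemma norm_cexp_mul_I_sub_one_le (θ : ℝ) : ‖Complex.exp (θ * I) - 1‖ ≤ |θ| := by
  have h := Convex.norm_image_sub_le_of_norm_hasDerivWithin_le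
    (f := fun t : ℝ => Complex.exp (t * I)) (f' := fun t : ℝ => I * Complex.exp (I * t))
    (C := 1) (s := Set.univ) ?_ ?_ convex_univ (Set.mem_univ (0:ℝ)) (Set.mem_univ θ)
  · simpa using h
  · intro t _
    have := hasDerivAt_cexp_mul I t
    exact this.hasDerivWithinAt.congr (by intro y _; rw [mul_comm]) (by rw [mul_comm])
  · intro t _
    simp [Complex.norm_exp]

private lemma integrable_cexp_mul {c : ℂ} (hc : c.re < 0) :
    IntegrableOn (fun x : ℝ => Complex.exp (c * x)) (Ioi 0) := by
  apply Integrable.mono' (g := fun x : ℝ => Real.exp (-(-c.re) * x))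
    ((exp_neg_integrableOn_Ioi 0 (by linarith)))
    (Continuous.aestronglyMeasurable (by continuity))
  filter_upwards with x
  rw [Complex.norm_exp]
  simp [mul_comm]

private lemma integral_cexp_mul {c : ℂ} (hc : c.re < 0) :
    ∫ x in Ioi (0:ℝ), Complex.exp (c * x) = -c⁻¹ := by
  have hc0 : c ≠ 0 := fun h => by simp [h] at hc
  have key := integral_Ioi_of_hasDerivAt_of_tendsto'
    (f := fun x : ℝ => c⁻¹ * Complex.exp (c * x)) (f' := fun x : ℝ => Complex.exp (c * x))
    (a := 0) (m := 0) ?_ (integrable_cexp_mul hc) ?_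
  · simpa using key
  · intro x _
    have h := (hasDerivAt_cexp_mul c x).const_mul c⁻¹
    have e : c⁻¹ * (c * Complex.exp (c * x)) = Complex.exp (c * x) := by
      rw [← mul_assoc, inv_mul_cancel₀ hc0, one_mul]
    rw [e] at h; exact h
  · rw [tendsto_zero_iff_norm_tendsto_zero]
    have h1 : Tendsto (fun x : ℝ => Real.exp (c.re * x)) atTop (nhds 0) := by
      apply Real.tendsto_exp_atBot.comp
      exact Tendsto.const_mul_atTop_of_neg hc tendsto_id
    have : (fun x : ℝ => ‖c⁻¹ * Complex.exp (c * x)‖)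
        = fun x : ℝ => ‖c⁻¹‖ * Real.exp (c.re * x) := by
      funext x; rw [norm_mul, Complex.norm_exp]
      simp [mul_comm]
    rw [this]
    simpa using h1.const_mul ‖c⁻¹‖

private lemma levy_integrable (α : ℂ) (hα : 0 < α.re) (z : ℝ) :
    IntegrableOn
      (fun x : ℝ => (Complex.exp (I * z * x) - 1) * (x : ℂ)⁻¹ * Complex.exp (-α * x))
      (Set.Ioi 0) := by
  apply Integrable.mono' (g := fun x : ℝ => |z| * Real.exp (-α.re * x))
    ((exp_neg_integrableOn_Ioi 0 hα).const_mul _)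
  · apply ContinuousOn.aestronglyMeasurable _ measurableSet_Ioi
    apply ContinuousOn.mul
    apply ContinuousOn.mul
    · exact (Continuous.continuousOn (by continuity)).sub continuousOn_const
    · exact ContinuousOn.inv₀ (Complex.continuous_ofReal.continuousOn)
        (fun x hx => by exact_mod_cast ne_of_gt (mem_Ioi.mp hx))
    · exact Continuous.continuousOn (by continuity)
  · filter_upwards [ae_restrict_mem measurableSet_Ioi] with x hx
    have hx0 : (0:ℝ) < x := hx
    have e1 : I * (z:ℂ) * (x:ℂ) = ((z*x : ℝ) : ℂ) * I := by push_cast; ring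
    rw [norm_mul, norm_mul, e1]
    have h1 : ‖Complex.exp (((z*x:ℝ):ℂ) * I) - 1‖ ≤ |z*x| := norm_cexp_mul_I_sub_one_le _
    have h2 : ‖((x:ℂ))⁻¹‖ = x⁻¹ := by
      rw [norm_inv, Complex.norm_real, Real.norm_eq_abs, abs_of_pos hx0]
    have h3 : ‖Complex.exp (-α * x)‖ = Real.exp (-α.re * x) := by
      rw [Complex.norm_exp]
      congr 1
      simp [Complex.mul_re]
    rw [h2, h3]
    have : ‖Complex.exp (((z*x:ℝ):ℂ) * I) - 1‖ * x⁻¹ ≤ |z| := by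
      calc ‖Complex.exp (((z*x:ℝ):ℂ) * I) - 1‖ * x⁻¹ ≤ |z*x| * x⁻¹ := by
            apply mul_le_mul_of_nonneg_right h1 (by positivity)
        _ = |z| := by
            rw [abs_mul, abs_of_pos hx0, mul_assoc, mul_inv_cancel₀ (ne_of_gt hx0), mul_one]
    exact mul_le_mul_of_nonneg_right this (Real.exp_nonneg _)

private lemma levy_hasDerivAt (α : ℂ) (hα : 0 < α.re) (w₀ : ℝ) :
    HasDerivAt (fun w : ℝ => ∫ x in Ioi (0:ℝ),
        (Complex.exp (I * w * x) - 1) * (x : ℂ)⁻¹ * Complex.exp (-α * x))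
      (I / (α - I * w₀)) w₀ := by
  have key := hasDerivAt_integral_of_dominated_loc_of_deriv_le
    (μ := volume.restrict (Ioi (0:ℝ)))
    (F := fun (w : ℝ) (x : ℝ) =>
      (Complex.exp (I * w * x) - 1) * (x : ℂ)⁻¹ * Complex.exp (-α * x))
    (F' := fun (w : ℝ) (x : ℝ) => I * Complex.exp ((I * w - α) * x))
    (x₀ := w₀) (bound := fun x : ℝ => Real.exp (-α.re * x)) (Metric.ball_mem_nhds w₀ one_pos)
    (Filter.Eventually.of_forall fun w => (levy_integrable α hα w).aestronglyMeasurable)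
    (levy_integrable α hα w₀)
    (Continuous.aestronglyMeasurable (by continuity))
    ?_ (exp_neg_integrableOn_Ioi 0 hα) ?_
  · have hc : ((I * (w₀:ℂ) - α)).re < 0 := by
      simp only [Complex.sub_re, Complex.mul_re, Complex.I_re, Complex.I_im,
        Complex.ofReal_re, Complex.ofReal_im]
      linarith
    have hval : ∫ x in Ioi (0:ℝ), I * Complex.exp ((I * w₀ - α) * x) = I / (α - I * w₀) := by
      rw [MeasureTheory.integral_const_mul, integral_cexp_mul hc, ← inv_neg, neg_sub,
        div_eq_mul_inv]
    rw [← hval]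
    exact key.2
  · filter_upwards with x
    intro w _
    have : ‖I * Complex.exp ((I * w - α) * x)‖ = Real.exp (-α.re * x) := by
      rw [norm_mul, Complex.norm_I, one_mul, Complex.norm_exp]
      congr 1
      simp [Complex.mul_re, Complex.sub_re, Complex.mul_im]
    exact le_of_eq this
  · filter_upwards [ae_restrict_mem measurableSet_Ioi] with x hx
    intro w _
    have hx0 : (x:ℂ) ≠ 0 := by exact_mod_cast ne_of_gt (mem_Ioi.mp hx)
    have h := (((hasDerivAt_cexp_mul (I * (x:ℂ)) w).sub_const 1).mul_const
      ((x:ℂ)⁻¹)).mul_const (Complex.exp (-α * x))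
    have hfun : (fun w : ℝ => (Complex.exp (I * (x:ℂ) * w) - 1) * (x:ℂ)⁻¹
          * Complex.exp (-α * x))
        = fun w : ℝ => (Complex.exp (I * (w:ℂ) * x) - 1) * (x:ℂ)⁻¹
          * Complex.exp (-α * x) := by
      funext y; rw [show I * (x:ℂ) * y = I * (y:ℂ) * x by ring]
    rw [hfun] at h
    have hval : I * (x:ℂ) * Complex.exp (I * (x:ℂ) * w) * (x:ℂ)⁻¹ * Complex.exp (-α * x)
        = I * Complex.exp ((I * w - α) * x) := by
      calc I * (x:ℂ) * Complex.exp (I * (x:ℂ) * w) * (x:ℂ)⁻¹ * Complex.exp (-α * x)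
          = I * ((x:ℂ) * (x:ℂ)⁻¹)
            * (Complex.exp (I * (x:ℂ) * w) * Complex.exp (-α * x)) := by ring
        _ = I * Complex.exp ((I * w - α) * x) := by
            rw [mul_inv_cancel₀ hx0, mul_one, ← Complex.exp_add]
            congr 2
            ring
    rw [hval] at h
    exact h

theorem exp_distribution_levy (α : ℂ) (hα : 0 < α.re) (z : ℝ) :
    IntegrableOn
      (fun x : ℝ => (Complex.exp (I * z * x) - 1) * (x : ℂ)⁻¹ * Complex.exp (-α * x))
      (Set.Ioi 0) ∧
    α / (α - I * z) =
      Complex.exp (∫ x in Set.Ioi (0 : ℝ),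
        (Complex.exp (I * z * x) - 1) * (x : ℂ)⁻¹ * Complex.exp (-α * x)) := by
  refine ⟨levy_integrable α hα z, ?_⟩
  set F : ℝ → ℂ := fun w => ∫ x in Ioi (0:ℝ),
    (Complex.exp (I * w * x) - 1) * (x : ℂ)⁻¹ * Complex.exp (-α * x) with hF
  set G : ℝ → ℂ := fun w => Complex.log α - Complex.log (α - I * w) with hG
  have hre : ∀ w : ℝ, (α - I * w).re = α.re := by
    intro w
    simp [Complex.sub_re, Complex.mul_re]
  have hslit : ∀ w : ℝ, α - I * w ∈ Complex.slitPlane := fun w =>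
    Complex.mem_slitPlane_iff.mpr (Or.inl (by rw [hre]; exact hα))
  have hne : ∀ w : ℝ, α - I * w ≠ 0 := fun w => Complex.slitPlane_ne_zero (hslit w)
  have hαne : α ≠ 0 := fun h => by simp [h] at hα
  have hGderiv : ∀ w : ℝ, HasDerivAt G (I / (α - I * w)) w := by
    intro w
    have hlin : HasDerivAt (fun w : ℝ => α - I * (w:ℂ)) (-I) w := by
      have h1 : HasDerivAt (fun w : ℝ => I * (w:ℂ)) I w := by
        simpa using ((hasDerivAt_id ((w:ℝ):ℂ)).const_mul I).comp_ofReal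
      simpa using h1.const_sub α
    have hlog := hlin.clog_real (hslit w)
    have := hlog.const_sub (Complex.log α)
    simpa [hG, neg_div] using this
  have hFG : ∀ w : ℝ, F w - G w = F 0 - G 0 := by
    intro w
    apply is_const_of_deriv_eq_zero (f := fun w => F w - G w)
    · intro x
      exact ((levy_hasDerivAt α hα x).sub (hGderiv x)).differentiableAt
    · intro x
      have h2 := ((levy_hasDerivAt α hα x).sub (hGderiv x)).deriv
      rw [sub_self] at h2
      exact h2
  have hF0 : F 0 = 0 := by
    rw [hF]
    simp
  have hG0 : G 0 = 0 := by
    rw [hG]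
    simp
  have hFz : F z = G z := by
    have := hFG z
    rw [hF0, hG0] at this
    linear_combination this
  show α / (α - I * z) = Complex.exp (F z)
  rw [hFz, hG, Complex.exp_sub, Complex.exp_log hαne, Complex.exp_log (hne z)]
end

section
/- For all real numbers σ > 1/2, γ ∈ ℝ and t ∈ ℝ, ((σ − 1/2 − iγ − it)/(σ − 1/2 − iγ)) · ((σ − 1/2 + iγ − it)/(σ − 1/2 + iγ)) = exp( −2 ∫₀^∞ (e^{itx} − 1) cos(γx) e^{−(σ−1/2)x} x^{−1} dx ), the integral converging absolutely. -/
set_option maxHeartbeats 1000000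

open MeasureTheory Complex Set

lemma cexp_int {s : ℂ} (hs : 0 < s.re) :
    IntegrableOn (fun x : ℝ => Complex.exp (-s * x)) (Set.Ioi 0) := by
  apply Integrable.mono' ((exp_neg_integrableOn_Ioi 0 hs).const_mul 1)
  · exact (Complex.continuous_exp.comp (by continuity)).aestronglyMeasurable
  · filter_upwards [ae_restrict_mem measurableSet_Ioi] with x hx
    have : ‖Complex.exp (-s * x)‖ = Real.exp ((-s * x).re) := Complex.norm_exp _
    rw [this]
    simp only [one_mul, neg_mul, Complex.neg_re, Complex.mul_re, Complex.ofReal_re,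
      Complex.ofReal_im, mul_zero, sub_zero]
    exact le_of_eq rfl

lemma cexp_integral {s : ℂ} (hs : 0 < s.re) :
    ∫ x in Set.Ioi (0:ℝ), Complex.exp (-s * x) = 1 / s := by
  have hs0 : s ≠ 0 := fun h => by simp [h] at hs
  have hderiv : ∀ x ∈ Set.Ici (0:ℝ),
      HasDerivAt (fun x : ℝ => -Complex.exp (-s * x) / s) (Complex.exp (-s * x)) x := by
    intro x _
    have h1 : HasDerivAt (fun x : ℝ => -s * (x:ℂ)) (-s) x := by
      simpa using (Complex.ofRealCLM.hasDerivAt (x := x)).const_mul (-s)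
    have := ((h1.cexp).neg.div_const s)
    exact this.congr_deriv (by rw [div_eq_iff hs0]; ring)
  have htend : Filter.Tendsto (fun x : ℝ => -Complex.exp (-s * x) / s)
      Filter.atTop (nhds 0) := by
    rw [show (0:ℂ) = -0/s by simp]
    apply Filter.Tendsto.div_const
    apply Filter.Tendsto.neg
    rw [tendsto_zero_iff_norm_tendsto_zero]
    have : (fun x : ℝ => ‖Complex.exp (-s * x)‖) = fun x : ℝ => Real.exp (-(s.re * x)) := by
      funext x
      rw [Complex.norm_exp]
      congr 1
      simp [Complex.mul_re]
    rw [this]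
    exact Real.tendsto_exp_atBot.comp (Filter.tendsto_neg_atBot_iff.mpr
      (Filter.Tendsto.const_mul_atTop hs Filter.tendsto_id))
  have := integral_Ioi_of_hasDerivAt_of_tendsto' hderiv (cexp_int hs) htend
  rw [this]
  simp
  ring

lemma frullani {p q : ℂ} (hp : 0 < p.re) (hq : 0 < q.re) :
    IntegrableOn (fun x : ℝ => (Complex.exp (-p*x) - Complex.exp (-q*x))/x) (Set.Ioi 0) ∧
    ∫ x in Set.Ioi (0:ℝ), (Complex.exp (-p*x) - Complex.exp (-q*x))/x
      = Complex.log q - Complex.log p := by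
  have hm0 : 0 < min p.re q.re := lt_min hp hq
  obtain ⟨s, hsdef⟩ : ∃ s : ℝ → ℂ, s = fun u : ℝ => p + (u:ℂ) * (q - p) := ⟨_, rfl⟩
  have hs1 : s 1 = q := by rw [hsdef]; simp
  have hs0 : s 0 = p := by rw [hsdef]; simp
  have hscont : Continuous s := by
    rw [hsdef]
    exact continuous_const.add (Complex.continuous_ofReal.mul continuous_const)
  have hsderiv : ∀ u : ℝ, HasDerivAt s (q - p) u := by
    intro u
    rw [hsdef]
    have : HasDerivAt (fun u : ℝ => (u:ℂ)) 1 u := by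
      simpa using (hasDerivAt_id u).ofReal_comp
    simpa using (this.mul_const (q - p)).const_add p
  have hsre : ∀ u ∈ Set.Icc (0:ℝ) 1, min p.re q.re ≤ (s u).re := by
    intro u hu
    rw [hsdef]
    have h1 : (p + (u:ℂ) * (q - p)).re = (1 - u) * p.re + u * q.re := by
      simp [Complex.add_re, Complex.mul_re, Complex.sub_re]
      ring
    rw [h1]
    calc min p.re q.re = (1 - u) * min p.re q.re + u * min p.re q.re := by ring
    _ ≤ (1 - u) * p.re + u * q.re := by
        apply add_le_add
        · exact mul_le_mul_of_nonneg_left (min_le_left _ _) (by linarith [hu.2])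
        · exact mul_le_mul_of_nonneg_left (min_le_right _ _) hu.1
  have hspos : ∀ u ∈ Set.Icc (0:ℝ) 1, 0 < (s u).re :=
    fun u hu => lt_of_lt_of_le hm0 (hsre u hu)
  have hGcont : Continuous (fun z : ℝ × ℝ => (q - p) * Complex.exp (-(s z.2) * z.1)) := by
    apply continuous_const.mul
    apply Complex.continuous_exp.comp
    exact ((hscont.comp continuous_snd).neg).mul (Complex.continuous_ofReal.comp continuous_fst)
  have hGint : Integrable (fun z : ℝ × ℝ => (q - p) * Complex.exp (-(s z.2) * z.1))
      ((volume.restrict (Set.Ioi 0)).prod (volume.restrict (Set.Ioc 0 1))) := by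
    apply Integrable.mono'
      (g := fun z : ℝ × ℝ => (‖q - p‖ * Real.exp (-(min p.re q.re) * z.1)) * (1:ℝ))
    · exact Integrable.mul_prod ((exp_neg_integrableOn_Ioi 0 hm0).const_mul _)
        (integrableOn_const (by simp))
    · exact hGcont.aestronglyMeasurable
    · rw [Measure.prod_restrict]
      filter_upwards [ae_restrict_mem (measurableSet_Ioi.prod measurableSet_Ioc)] with z hz
      obtain ⟨hz1, hz2⟩ := hz
      rw [norm_mul, mul_one]
      apply mul_le_mul_of_nonneg_left _ (norm_nonneg _)
      rw [Complex.norm_exp]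
      apply Real.exp_le_exp.mpr
      have h1 : (-(s z.2) * z.1).re = -(s z.2).re * z.1 := by
        simp [Complex.mul_re]
      rw [h1]
      have := hsre z.2 ⟨hz2.1.le, hz2.2⟩
      nlinarith [le_of_lt (Set.mem_Ioi.mp hz1)]
  have hpoint : ∀ x ∈ Set.Ioi (0:ℝ),
      (Complex.exp (-p*x) - Complex.exp (-q*x))/x
        = ∫ u in Set.Ioc (0:ℝ) 1, (q - p) * Complex.exp (-(s u) * x) := by
    intro x hx
    have hx0 : (0:ℝ) < x := hx
    have hxc : (x:ℂ) ≠ 0 := by exact_mod_cast hx0.ne'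
    rw [← intervalIntegral.integral_of_le zero_le_one]
    have hF : ∀ u ∈ Set.uIcc (0:ℝ) 1,
        HasDerivAt (fun u : ℝ => -Complex.exp (-(s u) * x) / x)
          ((q - p) * Complex.exp (-(s u) * x)) u := by
      intro u _
      have h1 : HasDerivAt (fun u : ℝ => -(s u) * (x:ℂ)) (-(q - p) * x) u := by
        simpa using ((hsderiv u).neg.mul_const (x:ℂ))
      have := (h1.cexp).neg.div_const (x:ℂ)
      exact this.congr_deriv (by rw [div_eq_iff hxc]; ring)
    have hcont : ContinuousOn (fun u : ℝ => (q - p) * Complex.exp (-(s u) * x))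
        (Set.uIcc (0:ℝ) 1) := by
      apply Continuous.continuousOn
      exact continuous_const.mul (Complex.continuous_exp.comp
        ((hscont.neg).mul continuous_const))
    rw [intervalIntegral.integral_eq_sub_of_hasDerivAt hF hcont.intervalIntegrable]
    rw [hs1, hs0]
    field_simp
    ring
  have hInt : IntegrableOn (fun x : ℝ => (Complex.exp (-p*x) - Complex.exp (-q*x))/x)
      (Set.Ioi 0) := by
    have h2 := hGint.integral_prod_left
    apply IntegrableOn.congr_fun h2 _ measurableSet_Ioi
    intro x hx
    exact (hpoint x hx).symm
  refine ⟨hInt, ?_⟩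
  rw [setIntegral_congr_fun measurableSet_Ioi hpoint]
  rw [integral_integral_swap hGint]
  have hinner : ∀ u ∈ Set.Ioc (0:ℝ) 1,
      (∫ x in Set.Ioi (0:ℝ), (q - p) * Complex.exp (-(s u) * x)) = (q - p) / (s u) := by
    intro u hu
    rw [MeasureTheory.integral_const_mul, cexp_integral (hspos u ⟨hu.1.le, hu.2⟩)]
    ring
  rw [setIntegral_congr_fun measurableSet_Ioc hinner]
  rw [← intervalIntegral.integral_of_le zero_le_one]
  have hlog : ∀ u ∈ Set.uIcc (0:ℝ) 1,
      HasDerivAt (fun u : ℝ => Complex.log (s u)) ((q - p) / (s u)) u := by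
    intro u hu
    exact (hsderiv u).clog_real
      (Or.inl (hspos u (by rwa [Set.uIcc_of_le zero_le_one] at hu)))
  have hcont2 : ContinuousOn (fun u : ℝ => (q - p) / (s u)) (Set.uIcc (0:ℝ) 1) := by
    apply ContinuousOn.div continuousOn_const hscont.continuousOn
    intro u hu
    rw [Set.uIcc_of_le zero_le_one] at hu
    exact fun h => (hspos u hu).ne' (by rw [h]; simp)
  rw [intervalIntegral.integral_eq_sub_of_hasDerivAt hlog hcont2.intervalIntegrable]
  rw [hs1, hs0]

theorem pair_of_zeros_levy (σ γ t : ℝ) (hσ : 1 / 2 < σ) :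
    IntegrableOn
      (fun x : ℝ => (Complex.exp (I * t * x) - 1) * (Real.cos (γ * x) : ℂ) *
        (Real.exp (-(σ - 1 / 2) * x) : ℂ) / (x : ℂ))
      (Set.Ioi 0) ∧
    (((σ : ℂ) - 1 / 2 - I * γ - I * t) / ((σ : ℂ) - 1 / 2 - I * γ)) *
        (((σ : ℂ) - 1 / 2 + I * γ - I * t) / ((σ : ℂ) - 1 / 2 + I * γ)) =
      Complex.exp (-2 * ∫ x in Set.Ioi (0 : ℝ),
        (Complex.exp (I * t * x) - 1) * (Real.cos (γ * x) : ℂ) *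
          (Real.exp (-(σ - 1 / 2) * x) : ℂ) / (x : ℂ)) := by
  have hre : ∀ c : ℝ, ((σ : ℂ) - 1 / 2 + I * c).re = σ - 1/2 := by
    intro c
    simp [Complex.sub_re, Complex.add_re, Complex.mul_re]
  have hre' : ∀ c d : ℝ, (0:ℝ) < ((σ : ℂ) - 1 / 2 + I * c + I * d).re := by
    intro c d
    have : ((σ : ℂ) - 1 / 2 + I * c + I * d).re = σ - 1/2 := by
      simp [Complex.sub_re, Complex.add_re, Complex.mul_re]
    rw [this]; linarith
  set u₁ : ℂ := (σ : ℂ) - 1 / 2 - I * γ - I * t with hu₁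
  set v₁ : ℂ := (σ : ℂ) - 1 / 2 - I * γ with hv₁
  set u₂ : ℂ := (σ : ℂ) - 1 / 2 + I * γ - I * t with hu₂
  set v₂ : ℂ := (σ : ℂ) - 1 / 2 + I * γ with hv₂
  have hu₁re : 0 < u₁.re := by
    have := hre' (-γ) (-t); rw [hu₁]; convert this using 2; push_cast; ring
  have hv₁re : 0 < v₁.re := by
    have := hre' (-γ) 0; rw [hv₁]; convert this using 2; push_cast; ring
  have hu₂re : 0 < u₂.re := by
    have := hre' γ (-t); rw [hu₂]; convert this using 2; push_cast; ring
  have hv₂re : 0 < v₂.re := by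
    have := hre' γ 0; rw [hv₂]; convert this using 2; push_cast; ring
  have h1 := frullani hu₁re hv₁re
  have h2 := frullani hu₂re hv₂re
  have hEq : Set.EqOn
      (fun x : ℝ => (2:ℂ)⁻¹ * ((Complex.exp (-u₁*x) - Complex.exp (-v₁*x))/x
        + (Complex.exp (-u₂*x) - Complex.exp (-v₂*x))/x))
      (fun x : ℝ => (Complex.exp (I * t * x) - 1) * (Real.cos (γ * x) : ℂ) *
        (Real.exp (-(σ - 1 / 2) * x) : ℂ) / (x : ℂ)) (Set.Ioi 0) := by
    intro x hx
    have hx0 : (0:ℝ) < x := hx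
    have hxc : (x:ℂ) ≠ 0 := by exact_mod_cast hx0.ne'
    simp only
    have e1 : Complex.exp (-u₁*x) = Complex.exp (I*t*x) *
        (Complex.exp ((γ*x : ℝ) * I) * Complex.exp (((-(σ - 1/2)*x : ℝ) : ℂ))) := by
      rw [← Complex.exp_add, ← Complex.exp_add]; congr 1; rw [hu₁]; push_cast; ring
    have e2 : Complex.exp (-v₁*x) = Complex.exp ((γ*x : ℝ) * I) *
        Complex.exp (((-(σ - 1/2)*x : ℝ) : ℂ)) := by
      rw [← Complex.exp_add]; congr 1; rw [hv₁]; push_cast; ring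
    have e3 : Complex.exp (-u₂*x) = Complex.exp (I*t*x) *
        (Complex.exp (-((γ*x : ℝ) * I)) * Complex.exp (((-(σ - 1/2)*x : ℝ) : ℂ))) := by
      rw [← Complex.exp_add, ← Complex.exp_add]; congr 1; rw [hu₂]; push_cast; ring
    have e4 : Complex.exp (-v₂*x) = Complex.exp (-((γ*x : ℝ) * I)) *
        Complex.exp (((-(σ - 1/2)*x : ℝ) : ℂ)) := by
      rw [← Complex.exp_add]; congr 1; rw [hv₂]; push_cast; ring
    rw [e1, e2, e3, e4, Complex.ofReal_cos, Complex.ofReal_exp, Complex.cos]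
    field_simp
  have hIntSum : IntegrableOn
      (fun x : ℝ => (2:ℂ)⁻¹ * ((Complex.exp (-u₁*x) - Complex.exp (-v₁*x))/x
        + (Complex.exp (-u₂*x) - Complex.exp (-v₂*x))/x)) (Set.Ioi 0) :=
    (h1.1.add h2.1).const_mul _
  refine ⟨IntegrableOn.congr_fun hIntSum hEq measurableSet_Ioi, ?_⟩
  rw [← setIntegral_congr_fun measurableSet_Ioi hEq]
  rw [MeasureTheory.integral_const_mul, integral_add h1.1 h2.1, h1.2, h2.2]
  have hne : ∀ z : ℂ, 0 < z.re → z ≠ 0 := by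
    intro z hz h; rw [h] at hz; simp at hz
  rw [show (-2 : ℂ) * (2⁻¹ * ((Complex.log v₁ - Complex.log u₁)
        + (Complex.log v₂ - Complex.log u₂)))
      = (Complex.log u₁ - Complex.log v₁) + (Complex.log u₂ - Complex.log v₂) by ring]
  rw [Complex.exp_add, Complex.exp_sub, Complex.exp_sub,
    Complex.exp_log (hne _ hu₁re), Complex.exp_log (hne _ hv₁re),
    Complex.exp_log (hne _ hu₂re), Complex.exp_log (hne _ hv₂re)]
end
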